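/- Let m and n be non-negative integers and let x_1,…,x_n be nonzero complex numbers such that the 2n numbers x_1, x_1^{-1}, …, x_n, x_n^{-1} are pairwise distinct. Then s_{((2m)^n)}(x_1, x_1^{-1}, x_2, x_2^{-1}, …, x_n, x_n^{-1}) = (1/D_1(n)) · Σ_{A,B⊆[n], |A|+|B|=n} (−1)^{(Σ_{a∈A} a)+(Σ_{b∈B} b)+n|B|−binom(n+1,2)} · (∏_{a∈A} x_a)^{2m+n} · (∏_{b∈B} x_b^{−1})^{2m+n} · V(A)·V(B^{−1})·R(A,B^{−1})·V(A^c)·V((B^c)^{−1})·R(A^c,(B^c)^{−1}), where D_1(n) = V([n])·V([n]^{−1})·R([n],[n]^{−1}), and A^c, B^c denote the complements of A, B in [n]. -/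

import Mathlib

open Matrix Finset

/-- The `2n` variables `x₁, x₁⁻¹, x₂, x₂⁻¹, …, xₙ, xₙ⁻¹`. -/
noncomputable def pairVars {n : ℕ} (x : Fin n → ℂ) : Fin (2 * n) → ℂ :=
  fun i =>
    if (i : ℕ) % 2 = 0 then x ⟨(i : ℕ) / 2, by have := i.isLt; omega⟩
    else (x ⟨(i : ℕ) / 2, by have := i.isLt; omega⟩)⁻¹
/-- The Schur function `s_λ(x₁,…,x_N)` as a ratio of determinants,
for an integer shape `lam` (indexed by `Fin N`, i.e. 0-based). -/
noncomputable def schurChar {N : ℕ} (lam : Fin N → ℤ) (x : Fin N → ℂ) : ℂ :=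
  Matrix.det (Matrix.of fun h t : Fin N =>
      x h ^ (lam t + (N : ℤ) - 1 - ((t : ℕ) : ℤ))) /
    Matrix.det (Matrix.of fun h t : Fin N => x h ^ ((N : ℤ) - 1 - ((t : ℕ) : ℤ)))
/-- `V(A) = ∏_{a,b ∈ A, a < b} (x_a - x_b)`. -/
noncomputable def Vprod {M : ℕ} (x : Fin M → ℂ) (A : Finset (Fin M)) : ℂ :=
  ∏ a ∈ A, ∏ b ∈ A, if a < b then x a - x b else 1

/-- `R(A, B⁻¹) = ∏_{a ∈ A} ∏_{b ∈ B} (x_a - x_b⁻¹)`. -/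
noncomputable def Rprod {M : ℕ} (x : Fin M → ℂ) (A B : Finset (Fin M)) : ℂ :=
  ∏ a ∈ A, ∏ b ∈ B, (x a - (x b)⁻¹)

namespace SchurAux


/-- product of differences in increasing index order -/
noncomputable def dprod {N : ℕ} (v : Fin N → ℂ) : ℂ :=
  ∏ i : Fin N, ∏ j ∈ Finset.Ioi i, (v i - v j)

lemma det_descend {N : ℕ} (v : Fin N → ℂ) :
    Matrix.det (Matrix.of fun i j : Fin N => v i ^ (N - 1 - (j : ℕ))) = dprod v := by
  have h1 : (Matrix.of fun i j : Fin N => v i ^ (N - 1 - (j : ℕ)))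
      = (Matrix.vandermonde v).submatrix id Fin.revPerm := by
    ext i j
    simp only [Matrix.of_apply, Matrix.submatrix_apply, Matrix.vandermonde, id_eq]
    congr 1
    simp [Fin.revPerm, Fin.val_rev]
    omega
  have h2 : Matrix.vandermonde (v ∘ Fin.rev) = (Matrix.vandermonde v).submatrix Fin.revPerm id := by
    ext i j; rfl
  have h3 := Matrix.det_permute' (Fin.revPerm) (Matrix.vandermonde v)
  have h4 := Matrix.det_permute (R := ℂ) (Fin.revPerm) (Matrix.vandermonde v)
  have h5 : Matrix.det (Matrix.of fun i j : Fin N => v i ^ (N - 1 - (j : ℕ)))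
      = Matrix.det (Matrix.vandermonde (v ∘ Fin.rev)) := by
    rw [h1, h2, h3, h4]
  rw [h5, Matrix.det_vandermonde]
  rw [dprod]
  rw [Finset.prod_sigma', Finset.prod_sigma']
  refine Finset.prod_nbij' (fun p => ⟨p.2.rev, p.1.rev⟩) (fun p => ⟨p.2.rev, p.1.rev⟩) ?_ ?_ ?_ ?_ ?_
  · rintro ⟨i, j⟩ h
    simp only [Finset.mem_sigma, Finset.mem_univ, Finset.mem_Ioi, true_and] at h ⊢
    exact Fin.rev_lt_rev.mpr h
  · rintro ⟨i, j⟩ h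
    simp only [Finset.mem_sigma, Finset.mem_univ, Finset.mem_Ioi, true_and] at h ⊢
    exact Fin.rev_lt_rev.mpr h
  · rintro ⟨i, j⟩ _; simp
  · rintro ⟨i, j⟩ _; simp
  · rintro ⟨i, j⟩ _
    simp [Function.comp, Fin.rev_rev]

lemma det_shiftpow {N : ℕ} (v : Fin N → ℂ) (k : ℕ) :
    Matrix.det (Matrix.of fun i j : Fin N => v i ^ (k + (N - 1 - (j : ℕ)))) =
      (∏ i, v i) ^ k * dprod v := by
  have : (Matrix.of fun i j : Fin N => v i ^ (k + (N - 1 - (j : ℕ))))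
      = Matrix.of fun i j : Fin N => (v i ^ k) * (Matrix.of fun i j : Fin N => v i ^ (N - 1 - (j : ℕ))) i j := by
    ext i j; simp [pow_add]
  rw [this, Matrix.det_mul_column, det_descend, Finset.prod_pow]



lemma cardc {n : ℕ} {S : Finset (Fin (n+n))} (hS : S.card = n) : Sᶜ.card = n := by
  rw [Finset.card_compl, Fintype.card_fin]; omega

noncomputable def rho {n : ℕ} (S : Finset (Fin (n+n))) (hS : S.card = n) :
    Equiv.Perm (Fin (n+n)) :=
  finSumFinEquiv.symm.trans ((Equiv.sumCongr
    (S.orderIsoOfFin hS).toEquiv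
    ((Sᶜ.orderIsoOfFin (cardc hS)).toEquiv.trans
      (Equiv.subtypeEquivRight (fun _ => Finset.mem_compl)))).trans
    (Equiv.sumCompl (· ∈ S)))

lemma rho_left {n : ℕ} (S : Finset (Fin (n+n))) (hS : S.card = n) (i : Fin n) :
    rho S hS (Fin.castAdd n i) = S.orderEmbOfFin hS i := by
  simp [rho, finSumFinEquiv_symm_apply_castAdd]

lemma rho_right {n : ℕ} (S : Finset (Fin (n+n))) (hS : S.card = n) (j : Fin n) :
    rho S hS (Fin.natAdd n j) = Sᶜ.orderEmbOfFin (cardc hS) j := by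
  rw [rho, Equiv.trans_apply, Equiv.trans_apply, finSumFinEquiv_symm_apply_natAdd]
  rfl

lemma castAdd_inj {n : ℕ} : Function.Injective (Fin.castAdd n : Fin n → Fin (n+n)) := by
  intro a b h
  have := congrArg Fin.val h
  simpa [Fin.ext_iff] using this

lemma castAdd_ne_natAdd {n : ℕ} (i j : Fin n) : Fin.castAdd n i ≠ Fin.natAdd n j := by
  intro h
  have := congrArg Fin.val h
  simp only [Fin.coe_castAdd, Fin.coe_natAdd] at this
  omega

theorem laplace {n : ℕ} (M : Matrix (Fin (n+n)) (Fin (n+n)) ℂ) :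
    M.det = ∑ S : Finset (Fin (n+n)), if hS : S.card = n then
      ((Equiv.Perm.sign (rho S hS) : ℤ) : ℂ) *
        Matrix.det (Matrix.of fun i j : Fin n =>
          M (rho S hS (Fin.castAdd n i)) (Fin.castAdd n j)) *
        Matrix.det (Matrix.of fun i j : Fin n =>
          M (rho S hS (Fin.natAdd n i)) (Fin.natAdd n j))
      else 0 := by
  classical
  rw [Matrix.det_apply']
  rw [← Finset.sum_fiberwise (univ : Finset (Equiv.Perm (Fin (n+n))))
    (fun σ => Finset.image (fun i : Fin n => σ (Fin.castAdd n i)) univ)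
    (fun σ => ((Equiv.Perm.sign σ : ℤ) : ℂ) * ∏ i, M (σ i) i)]
  refine Finset.sum_congr rfl fun S _ => ?_
  have keycard : ∀ σ : Equiv.Perm (Fin (n+n)),
      (Finset.image (fun i : Fin n => σ (Fin.castAdd n i)) univ).card = n := by
    intro σ
    have hinj : Function.Injective (fun i : Fin n => σ (Fin.castAdd n i)) :=
      fun a b h => castAdd_inj (σ.injective h)
    rw [Finset.card_image_of_injective _ hinj, card_univ, Fintype.card_fin]
  by_cases hS : S.card = n
  · rw [dif_pos hS]
    set Φ : Equiv.Perm (Fin n) × Equiv.Perm (Fin n) → Equiv.Perm (Fin (n+n)) :=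
      fun p => (rho S hS) * (Equiv.permCongr finSumFinEquiv (Equiv.sumCongr p.1 p.2)) with hΦ
    have hΦl : ∀ p i, Φ p (Fin.castAdd n i) = rho S hS (Fin.castAdd n (p.1 i)) := by
      intro p i
      simp [hΦ, Equiv.permCongr_apply, Equiv.Perm.mul_apply,
        finSumFinEquiv_symm_apply_castAdd]
    have hΦr : ∀ p j, Φ p (Fin.natAdd n j) = rho S hS (Fin.natAdd n (p.2 j)) := by
      intro p j
      simp only [hΦ, Equiv.Perm.mul_apply, Equiv.permCongr_apply,
        finSumFinEquiv_symm_apply_natAdd, Equiv.sumCongr_apply, Sum.map_inr]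
      rw [finSumFinEquiv_apply_right]
    have himg : ∀ p, Finset.image (fun i : Fin n => Φ p (Fin.castAdd n i)) univ = S := by
      intro p
      refine Finset.eq_of_subset_of_card_le ?_ ?_
      · intro q hq
        simp only [Finset.mem_image, Finset.mem_univ, true_and] at hq
        obtain ⟨i, rfl⟩ := hq
        rw [hΦl, rho_left]
        exact Finset.orderEmbOfFin_mem _ _ _
      · rw [keycard, hS]
    have main : ∑ σ ∈ univ.filter
          (fun σ : Equiv.Perm (Fin (n+n)) =>
            Finset.image (fun i : Fin n => σ (Fin.castAdd n i)) univ = S),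
          ((Equiv.Perm.sign σ : ℤ) : ℂ) * ∏ i, M (σ i) i
        = ∑ p : Equiv.Perm (Fin n) × Equiv.Perm (Fin n),
            (((Equiv.Perm.sign (rho S hS) : ℤ) : ℂ) *
              (((Equiv.Perm.sign p.1 : ℤ) : ℂ) * ((Equiv.Perm.sign p.2 : ℤ) : ℂ))) *
            ((∏ i, M (rho S hS (Fin.castAdd n (p.1 i))) (Fin.castAdd n i)) *
             (∏ j, M (rho S hS (Fin.natAdd n (p.2 j))) (Fin.natAdd n j))) := by
      refine (Finset.sum_nbij Φ ?_ ?_ ?_ ?_).symm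
      · intro p _
        simp only [Finset.mem_filter, Finset.mem_univ, true_and]
        exact himg p
      · intro p _ q _ h
        have h2 : Equiv.permCongr finSumFinEquiv (Equiv.sumCongr p.1 p.2)
            = Equiv.permCongr finSumFinEquiv (Equiv.sumCongr q.1 q.2) :=
          mul_left_cancel h
        have h3 : Equiv.sumCongr p.1 p.2 = Equiv.sumCongr q.1 q.2 :=
          (Equiv.permCongr finSumFinEquiv).injective h2
        have h4 : p.1 = q.1 := Equiv.ext fun i => by
          have := congrArg (fun e => Equiv.toFun e (Sum.inl i)) h3
          simpa using this
        have h5 : p.2 = q.2 := Equiv.ext fun i => by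
          have := congrArg (fun e => Equiv.toFun e (Sum.inr i)) h3
          simpa using this
        exact Prod.ext h4 h5
      · intro σ hσ
        simp only [Finset.coe_filter, Set.mem_setOf_eq, Finset.mem_univ, true_and] at hσ
        have hmemS : ∀ i : Fin n, σ (Fin.castAdd n i) ∈ S := by
          intro i
          rw [← hσ]
          exact Finset.mem_image_of_mem _ (Finset.mem_univ i)
        have hmemC : ∀ j : Fin n, σ (Fin.natAdd n j) ∈ Sᶜ := by
          intro j
          rw [Finset.mem_compl]
          intro hmem
          rw [← hσ] at hmem
          simp only [Finset.mem_image, Finset.mem_univ, true_and] at hmem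
          obtain ⟨i, hi⟩ := hmem
          exact castAdd_ne_natAdd i j (σ.injective hi)
        set f₁ : Fin n → {y // y ∈ S} := fun i => ⟨σ (Fin.castAdd n i), hmemS i⟩ with hf₁
        have hbij₁ : Function.Bijective f₁ := by
          rw [Fintype.bijective_iff_injective_and_card]
          constructor
          · intro a b hab
            apply castAdd_inj (σ.injective (congrArg Subtype.val hab))
          · rw [Fintype.card_coe, hS, Fintype.card_fin]
        set f₂ : Fin n → {y // y ∈ Sᶜ} := fun j => ⟨σ (Fin.natAdd n j), hmemC j⟩ with hf₂
        have natAdd_inj : Function.Injective (Fin.natAdd n : Fin n → Fin (n+n)) := by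
          intro a b h; have := congrArg Fin.val h
          simp only [Fin.coe_natAdd] at this
          exact Fin.ext (by omega)
        have hbij₂ : Function.Bijective f₂ := by
          rw [Fintype.bijective_iff_injective_and_card]
          constructor
          · intro a b hab
            apply natAdd_inj (σ.injective (congrArg Subtype.val hab))
          · rw [Fintype.card_coe, cardc hS, Fintype.card_fin]
        set τ₁ : Equiv.Perm (Fin n) :=
          (Equiv.ofBijective f₁ hbij₁).trans (S.orderIsoOfFin hS).toEquiv.symm with hτ₁
        set τ₂ : Equiv.Perm (Fin n) :=
          (Equiv.ofBijective f₂ hbij₂).trans (Sᶜ.orderIsoOfFin (cardc hS)).toEquiv.symm with hτ₂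
        refine ⟨(τ₁, τ₂), Finset.mem_coe.mpr (Finset.mem_univ _), ?_⟩
        apply Equiv.ext
        intro q
        obtain ⟨z, rfl⟩ : ∃ z, finSumFinEquiv z = q := ⟨_, finSumFinEquiv.apply_symm_apply q⟩
        cases z with
        | inl i =>
          rw [finSumFinEquiv_apply_left, hΦl, rho_left]
          have h6 : (S.orderIsoOfFin hS) (τ₁ i) = f₁ i := by
            rw [hτ₁]
            exact (S.orderIsoOfFin hS).toEquiv.apply_symm_apply (f₁ i)
          rw [← Finset.coe_orderIsoOfFin_apply, h6]
        | inr j =>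
          rw [finSumFinEquiv_apply_right, hΦr, rho_right]
          have h6 : (Sᶜ.orderIsoOfFin (cardc hS)) (τ₂ j) = f₂ j := by
            rw [hτ₂]
            exact (Sᶜ.orderIsoOfFin (cardc hS)).toEquiv.apply_symm_apply (f₂ j)
          rw [← Finset.coe_orderIsoOfFin_apply, h6]
      · intro p _
        have hsign : Equiv.Perm.sign (Φ p)
            = Equiv.Perm.sign (rho S hS) * (Equiv.Perm.sign p.1 * Equiv.Perm.sign p.2) := by
          rw [hΦ]
          rw [Equiv.Perm.sign_mul, Equiv.Perm.sign_permCongr, Equiv.Perm.sign_sumCongr]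
        have hprod : ∏ q, M (Φ p q) q
            = (∏ i, M (rho S hS (Fin.castAdd n (p.1 i))) (Fin.castAdd n i)) *
              (∏ j, M (rho S hS (Fin.natAdd n (p.2 j))) (Fin.natAdd n j)) := by
          rw [Fin.prod_univ_add (f := fun q => M (Φ p q) q)]
          congr 1
          · exact Finset.prod_congr rfl fun i _ => by rw [hΦl]
          · exact Finset.prod_congr rfl fun j _ => by rw [hΦr]
        rw [hsign, hprod]
        push_cast
        ring
    rw [main, Fintype.sum_prod_type, Finset.sum_comm]
    rw [Matrix.det_apply', Matrix.det_apply']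
    simp only [Finset.mul_sum, Finset.sum_mul, Matrix.of_apply]
    refine Finset.sum_congr rfl fun τ₁ _ => Finset.sum_congr rfl fun τ₂ _ => by ring
  · rw [dif_neg hS]
    rw [Finset.filter_eq_empty_iff.mpr, Finset.sum_empty]
    intro σ _
    intro h
    exact hS (by rw [← h]; exact keycard σ)



def d0 (a : Fin n) : Fin (n+n) := ⟨2*a.val, by have := a.isLt; omega⟩
def d1 (b : Fin n) : Fin (n+n) := ⟨2*b.val+1, by have := b.isLt; omega⟩

lemma d0_inj : Function.Injective (d0 (n := n)) := by
  intro a b h; have := congrArg Fin.val h; simp only [d0] at this; exact Fin.ext (by omega)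

lemma d1_inj : Function.Injective (d1 (n := n)) := by
  intro a b h; have := congrArg Fin.val h; simp only [d1] at this; exact Fin.ext (by omega)

lemma d0_ne_d1 (a b : Fin n) : d0 a ≠ d1 b := by
  intro h; have := congrArg Fin.val h; simp only [d0, d1] at this; omega

lemma d0_lt_d0 {a b : Fin n} : d0 a < d0 b ↔ a < b := by
  simp only [d0, Fin.lt_def]; omega

lemma d1_lt_d1 {a b : Fin n} : d1 a < d1 b ↔ a < b := by
  simp only [d1, Fin.lt_def]; omega

lemma d0_lt_d1 {a b : Fin n} : d0 a < d1 b ↔ a ≤ b := by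
  simp only [d0, d1, Fin.lt_def, Fin.le_def]; omega

lemma d1_lt_d0 {a b : Fin n} : d1 a < d0 b ↔ a < b := by
  simp only [d0, d1, Fin.lt_def]; omega

lemma d_exhaust (q : Fin (n+n)) : (∃ a, d0 a = q) ∨ (∃ b, d1 b = q) := by
  rcases Nat.even_or_odd q.val with h | h
  · left
    refine ⟨⟨q.val / 2, by have := q.isLt; omega⟩, Fin.ext ?_⟩
    simp only [d0]
    obtain ⟨k, hk⟩ := h; omega
  · right
    refine ⟨⟨q.val / 2, by have := q.isLt; omega⟩, Fin.ext ?_⟩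
    simp only [d1]
    obtain ⟨k, hk⟩ := h; omega

def joinSet (A B : Finset (Fin n)) : Finset (Fin (n+n)) := A.image d0 ∪ B.image d1

lemma joinSet_disj (A B : Finset (Fin n)) : Disjoint (A.image d0) (B.image d1) := by
  rw [Finset.disjoint_left]
  intro q hq hq'
  simp only [Finset.mem_image] at hq hq'
  obtain ⟨a, _, rfl⟩ := hq
  obtain ⟨b, _, hb⟩ := hq'
  exact d0_ne_d1 a b hb.symm

lemma mem_joinSet_d0 {A B : Finset (Fin n)} {a : Fin n} : d0 a ∈ joinSet A B ↔ a ∈ A := by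
  simp only [joinSet, Finset.mem_union, Finset.mem_image]
  constructor
  · rintro (⟨a', ha', h⟩ | ⟨b, _, h⟩)
    · rwa [← d0_inj h]
    · exact absurd h.symm (d0_ne_d1 a b)
  · intro h; exact Or.inl ⟨a, h, rfl⟩

lemma mem_joinSet_d1 {A B : Finset (Fin n)} {b : Fin n} : d1 b ∈ joinSet A B ↔ b ∈ B := by
  simp only [joinSet, Finset.mem_union, Finset.mem_image]
  constructor
  · rintro (⟨a, _, h⟩ | ⟨b', hb', h⟩)
    · exact absurd h (d0_ne_d1 a b)
    · rwa [← d1_inj h]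
  · intro h; exact Or.inr ⟨b, h, rfl⟩

lemma card_joinSet (A B : Finset (Fin n)) : (joinSet A B).card = A.card + B.card := by
  rw [joinSet, Finset.card_union_of_disjoint (joinSet_disj A B),
    Finset.card_image_of_injective _ d0_inj, Finset.card_image_of_injective _ d1_inj]

lemma joinSet_compl (A B : Finset (Fin n)) : (joinSet A B)ᶜ = joinSet Aᶜ Bᶜ := by
  ext q
  rcases d_exhaust q with ⟨a, rfl⟩ | ⟨b, rfl⟩
  · simp [Finset.mem_compl, mem_joinSet_d0]
  · simp [Finset.mem_compl, mem_joinSet_d1]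

lemma joinSet_bij :
    Function.Bijective (fun AB : Finset (Fin n) × Finset (Fin n) => joinSet AB.1 AB.2) := by
  constructor
  · intro p q h
    simp only at h
    have hA : p.1 = q.1 := by
      ext a
      rw [← mem_joinSet_d0 (B := p.2), h, mem_joinSet_d0]
    have hB : p.2 = q.2 := by
      ext b
      rw [← mem_joinSet_d1 (A := p.1), h, mem_joinSet_d1]
    exact Prod.ext hA hB
  · intro S
    refine ⟨(univ.filter (fun a => d0 a ∈ S), univ.filter (fun b => d1 b ∈ S)), ?_⟩
    ext q
    rcases d_exhaust q with ⟨a, rfl⟩ | ⟨b, rfl⟩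
    · simp [mem_joinSet_d0]
    · simp [mem_joinSet_d1]

lemma prod_joinSet (A B : Finset (Fin n)) (f : Fin (n+n) → ℂ) :
    ∏ p ∈ joinSet A B, f p = (∏ a ∈ A, f (d0 a)) * ∏ b ∈ B, f (d1 b) := by
  rw [joinSet, Finset.prod_union (joinSet_disj A B),
    Finset.prod_image (fun a _ b _ h => d0_inj h), Finset.prod_image (fun a _ b _ h => d1_inj h)]

noncomputable def yvar (x : Fin n → ℂ) : Fin (n+n) → ℂ :=
  fun p => pairVars x (finCongr (by omega) p)

lemma yvar_d0 (x : Fin n → ℂ) (a : Fin n) : yvar x (d0 a) = x a := by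
  simp only [yvar, pairVars, finCongr_apply, Fin.coe_cast, d0]
  rw [if_pos (by omega)]
  congr 1
  exact Fin.ext (by simp)

lemma yvar_d1 (x : Fin n → ℂ) (b : Fin n) : yvar x (d1 b) = (x b)⁻¹ := by
  simp only [yvar, pairVars, finCongr_apply, Fin.coe_cast, d1]
  rw [if_neg (by omega)]
  congr 2
  exact Fin.ext (by simp; omega)



variable {n : ℕ}

/-- number of pairs `(a,b) ∈ A × Aᶜ` with `b < a`. -/
def K2 (A : Finset (Fin n)) : ℕ := ∑ a ∈ A, (Aᶜ.filter (· < a)).card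

lemma sum_card_filter_lt_self (A : Finset (Fin n)) :
    ∑ a ∈ A, (A.filter (· < a)).card = A.card.choose 2 := by
  induction A using Finset.induction_on_max with
  | empty => simp
  | insert a A ha ih =>
    have hna : a ∉ A := fun h => lt_irrefl a (ha a h)
    rw [Finset.sum_insert hna, Finset.card_insert_of_notMem hna]
    have h1 : (insert a A).filter (· < a) = A := by
      ext b
      simp only [Finset.mem_filter, Finset.mem_insert]
      constructor
      · rintro ⟨rfl | hb, hlt⟩
        · exact absurd hlt (lt_irrefl _)
        · exact hb
      · intro hb; exact ⟨Or.inr hb, ha b hb⟩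
    have h2 : ∀ b ∈ A, (insert a A).filter (· < b) = A.filter (· < b) := by
      intro b hb
      ext c
      simp only [Finset.mem_filter, Finset.mem_insert]
      constructor
      · rintro ⟨rfl | hc, hlt⟩
        · exact absurd (lt_trans (ha b hb) hlt) (lt_irrefl _)
        · exact ⟨hc, hlt⟩
      · rintro ⟨hc, hlt⟩; exact ⟨Or.inr hc, hlt⟩
    rw [h1, Finset.sum_congr rfl (fun b hb => by rw [h2 b hb]), ih,
      Nat.choose_succ_succ, Nat.choose_one_right]

lemma card_filter_lt_add (A : Finset (Fin n)) (a : Fin n) :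
    (A.filter (· < a)).card + (Aᶜ.filter (· < a)).card = (a : ℕ) := by
  have hd : Disjoint (A.filter (· < a)) (Aᶜ.filter (· < a)) :=
    Finset.disjoint_filter_filter (disjoint_compl_right)
  rw [← Finset.card_union_of_disjoint hd, ← Finset.filter_union, Finset.union_compl]
  have : univ.filter (· < a) = Finset.Iio a := by
    ext b; simp [Finset.mem_Iio]
  rw [this, Fin.card_Iio]

lemma K2_add_choose (A : Finset (Fin n)) :
    K2 A + A.card.choose 2 = ∑ a ∈ A, (a : ℕ) := by
  rw [K2, ← sum_card_filter_lt_self A, ← Finset.sum_add_distrib]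
  refine Finset.sum_congr rfl fun a _ => ?_
  rw [Nat.add_comm, card_filter_lt_add]

lemma choose_two_add (a b : ℕ) : (a+b).choose 2 = a.choose 2 + b.choose 2 + a*b := by
  induction b with
  | zero => simp
  | succ k ih =>
    have h1 : a + (k+1) = (a+k) + 1 := by omega
    rw [h1, Nat.choose_succ_succ, Nat.choose_one_right, ih,
      Nat.choose_succ_succ, Nat.choose_one_right]
    ring



noncomputable def VLd (w : Fin n → ℂ) (C D : Finset (Fin n)) : ℂ :=
  ∏ a ∈ C, ∏ b ∈ D.filter (fun b => a < b), (w a - w b)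

noncomputable def VGd (w : Fin n → ℂ) (C D : Finset (Fin n)) : ℂ :=
  ∏ a ∈ C, ∏ b ∈ D.filter (fun b => b < a), (w a - w b)

lemma prod_neg_eq {ι : Type*} (s : Finset ι) (f : ι → ℂ) :
    ∏ i ∈ s, (-f i) = (-1 : ℂ) ^ s.card * ∏ i ∈ s, f i := by
  rw [Finset.prod_congr rfl (fun i _ => neg_eq_neg_one_mul (f i)), Finset.prod_mul_distrib,
    Finset.prod_const]

lemma Vprod_eq_VLd (w : Fin n → ℂ) (A : Finset (Fin n)) : Vprod w A = VLd w A A := by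
  rw [Vprod, VLd]
  exact Finset.prod_congr rfl fun a _ => (Finset.prod_filter _ _).symm

lemma VLd_univ_split (w : Fin n → ℂ) (C D : Finset (Fin n)) :
    VLd w C univ = VLd w C D * VLd w C Dᶜ := by
  rw [VLd, VLd, VLd, ← Finset.prod_mul_distrib]
  refine Finset.prod_congr rfl fun a _ => ?_
  rw [← Finset.prod_union (Finset.disjoint_filter_filter disjoint_compl_right),
    ← Finset.filter_union, Finset.union_compl]

lemma Vprod_univ_split (w : Fin n → ℂ) (A : Finset (Fin n)) :
    Vprod w univ = VLd w A A * VLd w A Aᶜ * VLd w Aᶜ A * VLd w Aᶜ Aᶜ := by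
  rw [Vprod_eq_VLd, VLd]
  rw [← Finset.prod_mul_prod_compl A (fun a => ∏ b ∈ univ.filter (fun b => a < b), (w a - w b))]
  have h1 : VLd w A univ = ∏ a ∈ A, ∏ b ∈ univ.filter (fun b => a < b), (w a - w b) := rfl
  have h2 : VLd w Aᶜ univ = ∏ a ∈ Aᶜ, ∏ b ∈ univ.filter (fun b => a < b), (w a - w b) := rfl
  rw [← h1, ← h2, VLd_univ_split w A A, VLd_univ_split w Aᶜ A]
  ring

/-- split a full rectangular product into the `<` and `>` filtered parts
(valid when `C` and `D` are disjoint). -/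
lemma rect_split (w : Fin n → ℂ) (C D : Finset (Fin n)) (hCD : Disjoint C D) :
    ∏ a ∈ C, ∏ b ∈ D, (w a - w b) = VLd w C D * VGd w C D := by
  rw [VLd, VGd, ← Finset.prod_mul_distrib]
  refine Finset.prod_congr rfl fun a ha => ?_
  rw [← Finset.prod_filter_mul_prod_filter_not D (fun b => a < b)]
  congr 1
  refine Finset.prod_congr (Finset.filter_congr fun b hb => ?_) fun _ _ => rfl
  have hba : b ≠ a := fun h => Finset.disjoint_left.mp hCD ha (h ▸ hb)
  simp only [not_lt]
  constructor
  · intro h; exact lt_of_le_of_ne h hba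
  · intro h; exact le_of_lt h

/-- swap and sign-flip: the `>` part equals a sign times the `<` part with roles exchanged. -/
lemma VGd_swap (w : Fin n → ℂ) (C D : Finset (Fin n)) :
    VGd w C D = (-1 : ℂ) ^ (∑ a ∈ C, (D.filter (· < a)).card) * VLd w D C := by
  rw [VGd]
  have h1 : ∀ a ∈ C, ∏ b ∈ D.filter (fun b => b < a), (w a - w b)
      = (-1 : ℂ) ^ (D.filter (· < a)).card * ∏ b ∈ D.filter (fun b => b < a), (w b - w a) := by
    intro a _
    rw [← prod_neg_eq]
    exact Finset.prod_congr rfl fun b _ => by ring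
  rw [Finset.prod_congr rfl h1, Finset.prod_mul_distrib, Finset.prod_pow_eq_pow_sum]
  congr 1
  rw [VLd]
  exact Finset.prod_comm' (fun a b => by
    simp only [Finset.mem_filter]
    tauto)

/-- merging lemma: `V(A) V(Aᶜ) ∏_{a∈A,b∈Aᶜ}(w a - w b) = (-1)^{K2 A} V(univ)`. -/
lemma VV_merge (w : Fin n → ℂ) (A : Finset (Fin n)) :
    Vprod w A * Vprod w Aᶜ * ∏ a ∈ A, ∏ b ∈ Aᶜ, (w a - w b)
      = (-1 : ℂ) ^ (K2 A) * Vprod w univ := by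
  rw [rect_split w A Aᶜ disjoint_compl_right, VGd_swap, Vprod_univ_split w A,
    Vprod_eq_VLd, Vprod_eq_VLd, K2]
  ring


lemma Rprod_inner_merge (x : Fin n → ℂ) (A B : Finset (Fin n)) :
    Rprod x A B * Rprod x A Bᶜ = Rprod x A univ := by
  rw [Rprod, Rprod, Rprod, ← Finset.prod_mul_distrib]
  exact Finset.prod_congr rfl fun a _ => Finset.prod_mul_prod_compl B _

lemma Rprod_outer_merge (x : Fin n → ℂ) (A : Finset (Fin n)) :
    Rprod x A univ * Rprod x Aᶜ univ = Rprod x univ univ :=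
  Finset.prod_mul_prod_compl A _

lemma cross_flip (x : Fin n → ℂ) (A B : Finset (Fin n)) :
    ∏ b ∈ B, ∏ a ∈ Aᶜ, ((x b)⁻¹ - x a)
      = (-1 : ℂ) ^ (Aᶜ.card * B.card) * Rprod x Aᶜ B := by
  have h1 : ∀ b ∈ B, ∏ a ∈ Aᶜ, ((x b)⁻¹ - x a)
      = (-1 : ℂ) ^ (Aᶜ.card) * ∏ a ∈ Aᶜ, (x a - (x b)⁻¹) := by
    intro b _
    rw [← prod_neg_eq]
    exact Finset.prod_congr rfl fun a _ => by ring
  rw [Finset.prod_congr rfl h1, Finset.prod_mul_distrib, Finset.prod_const, ← pow_mul]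
  rw [Rprod, Finset.prod_comm]

lemma master (x : Fin n → ℂ) (A B : Finset (Fin n)) :
    (Vprod x A * Vprod (fun i => (x i)⁻¹) B * Rprod x A B *
      Vprod x Aᶜ * Vprod (fun i => (x i)⁻¹) Bᶜ * Rprod x Aᶜ Bᶜ) *
      (∏ p ∈ joinSet A B, ∏ q ∈ (joinSet A B)ᶜ, (yvar x p - yvar x q))
    = (-1 : ℂ) ^ (K2 A + K2 B + Aᶜ.card * B.card) *
      (Vprod x univ * Vprod (fun i => (x i)⁻¹) univ * Rprod x univ univ) := by
  have hcross : (∏ p ∈ joinSet A B, ∏ q ∈ (joinSet A B)ᶜ, (yvar x p - yvar x q))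
      = ((∏ a ∈ A, ∏ b ∈ Aᶜ, (x a - x b)) * Rprod x A Bᶜ) *
        ((∏ b ∈ B, ∏ a ∈ Aᶜ, ((x b)⁻¹ - x a)) *
         (∏ b ∈ B, ∏ b' ∈ Bᶜ, ((fun i => (x i)⁻¹) b - (fun i => (x i)⁻¹) b'))) := by
    rw [joinSet_compl A B, prod_joinSet]
    have hA : ∀ a : Fin n, (∏ q ∈ joinSet Aᶜ Bᶜ, (yvar x (d0 a) - yvar x q))
        = (∏ b ∈ Aᶜ, (x a - x b)) * (∏ b ∈ Bᶜ, (x a - (x b)⁻¹)) := by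
      intro a
      rw [prod_joinSet]
      congr 1
      · exact Finset.prod_congr rfl fun b _ => by rw [yvar_d0, yvar_d0]
      · exact Finset.prod_congr rfl fun b _ => by rw [yvar_d0, yvar_d1]
    have hB : ∀ b : Fin n, (∏ q ∈ joinSet Aᶜ Bᶜ, (yvar x (d1 b) - yvar x q))
        = (∏ a ∈ Aᶜ, ((x b)⁻¹ - x a)) * (∏ b' ∈ Bᶜ, ((x b)⁻¹ - (x b')⁻¹)) := by
      intro b
      rw [prod_joinSet]
      congr 1
      · exact Finset.prod_congr rfl fun a _ => by rw [yvar_d1, yvar_d0]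
      · exact Finset.prod_congr rfl fun b' _ => by rw [yvar_d1, yvar_d1]
    rw [Finset.prod_congr rfl (fun a _ => hA a), Finset.prod_congr rfl (fun b _ => hB b),
      Finset.prod_mul_distrib, Finset.prod_mul_distrib]
    rw [Rprod]
  rw [hcross, cross_flip]
  have h1 := VV_merge x A
  have h2 := VV_merge (fun i => (x i)⁻¹) B
  have h3 := Rprod_inner_merge x A B
  have h4 := Rprod_inner_merge x Aᶜ B
  have h5 := Rprod_outer_merge x A
  calc (Vprod x A * Vprod (fun i => (x i)⁻¹) B * Rprod x A B *
      Vprod x Aᶜ * Vprod (fun i => (x i)⁻¹) Bᶜ * Rprod x Aᶜ Bᶜ) *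
      (((∏ a ∈ A, ∏ b ∈ Aᶜ, (x a - x b)) * Rprod x A Bᶜ) *
        (((-1 : ℂ) ^ (Aᶜ.card * B.card) * Rprod x Aᶜ B) *
         (∏ b ∈ B, ∏ b' ∈ Bᶜ, ((fun i => (x i)⁻¹) b - (fun i => (x i)⁻¹) b'))))
      = (Vprod x A * Vprod x Aᶜ * ∏ a ∈ A, ∏ b ∈ Aᶜ, (x a - x b)) *
        (Vprod (fun i => (x i)⁻¹) B * Vprod (fun i => (x i)⁻¹) Bᶜ *
          ∏ b ∈ B, ∏ b' ∈ Bᶜ, ((fun i => (x i)⁻¹) b - (fun i => (x i)⁻¹) b')) *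
        ((Rprod x A B * Rprod x A Bᶜ) * (Rprod x Aᶜ B * Rprod x Aᶜ Bᶜ)) *
        (-1 : ℂ) ^ (Aᶜ.card * B.card) := by ring
    _ = (-1 : ℂ) ^ (K2 A + K2 B + Aᶜ.card * B.card) *
      (Vprod x univ * Vprod (fun i => (x i)⁻¹) univ * Rprod x univ univ) := by
        rw [h1, h2, h3, h4, h5, pow_add, pow_add]
        ring

lemma sign_exponent_eq (A B : Finset (Fin n)) (hAB : A.card + B.card = n) :
    (-1 : ℂ) ^ ((∑ a ∈ A, (((a : ℕ) : ℤ) + 1)) + (∑ b ∈ B, (((b : ℕ) : ℤ) + 1)) +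
        (n : ℤ) * B.card - ((n + 1).choose 2 : ℤ))
      = (-1 : ℂ) ^ (K2 A + K2 B + Aᶜ.card * B.card) := by
  have hAc : Aᶜ.card = B.card := by
    have := Finset.card_add_card_compl A
    rw [Fintype.card_fin] at this; omega
  have h1 := K2_add_choose A
  have h2 := K2_add_choose B
  have h3 : n.choose 2 = A.card.choose 2 + B.card.choose 2 + A.card * B.card := by
    have := choose_two_add A.card B.card
    rw [hAB] at this
    exact this
  have h4 : (n+1).choose 2 = n.choose 2 + n := by
    rw [choose_two_add n 1]; simp
  have key : (∑ a ∈ A, (((a : ℕ) : ℤ) + 1)) + (∑ b ∈ B, (((b : ℕ) : ℤ) + 1)) +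
      (n : ℤ) * B.card - ((n + 1).choose 2 : ℤ)
      = ((K2 A + K2 B + Aᶜ.card * B.card : ℕ) : ℤ) := by
    have h1' : ((K2 A : ℤ) + (A.card.choose 2 : ℤ)) = ∑ a ∈ A, ((a : ℕ) : ℤ) := by
      exact_mod_cast congrArg (Nat.cast : ℕ → ℤ) h1
    have h2' : ((K2 B : ℤ) + (B.card.choose 2 : ℤ)) = ∑ b ∈ B, ((b : ℕ) : ℤ) := by
      exact_mod_cast congrArg (Nat.cast : ℕ → ℤ) h2
    have h3' : (n.choose 2 : ℤ) = (A.card.choose 2 : ℤ) + (B.card.choose 2 : ℤ)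
        + (A.card : ℤ) * B.card := by exact_mod_cast congrArg (Nat.cast : ℕ → ℤ) h3
    have h4' : (((n+1).choose 2 : ℕ) : ℤ) = (n.choose 2 : ℤ) + n := by
      exact_mod_cast congrArg (Nat.cast : ℕ → ℤ) h4
    have h5' : (n : ℤ) * B.card = (A.card : ℤ) * B.card + (B.card : ℤ) * B.card := by
      have : ((A.card + B.card : ℕ) : ℤ) = n := by exact_mod_cast hAB
      rw [← this]; push_cast; ring
    have hABz : (A.card : ℤ) + B.card = n := by exact_mod_cast hAB
    rw [Finset.sum_add_distrib, Finset.sum_add_distrib, Finset.sum_const, Finset.sum_const]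
    simp only [nsmul_eq_mul, mul_one]
    push_cast [hAc]
    linarith
  rw [key, zpow_natCast]


lemma prod_orderEmbOfFin {N k : ℕ} (S : Finset (Fin N)) (h : S.card = k) (f : Fin N → ℂ) :
    ∏ i : Fin k, f (S.orderEmbOfFin h i) = ∏ p ∈ S, f p := by
  refine Finset.prod_nbij (fun i => S.orderEmbOfFin h i) ?_ ?_ ?_ ?_
  · intro i _; exact Finset.orderEmbOfFin_mem _ _ _
  · intro a _ b _ hab; exact (S.orderEmbOfFin h).injective hab
  · intro p hp
    have : p ∈ Set.range (S.orderEmbOfFin h) := by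
      rw [Finset.range_orderEmbOfFin]; exact hp
    obtain ⟨i, hi⟩ := this
    exact ⟨i, Finset.mem_coe.mpr (Finset.mem_univ i), hi⟩
  · intro i _; rfl

lemma Ioi_castAdd {n : ℕ} (i : Fin n) :
    Finset.Ioi (Fin.castAdd n i) =
      ((Finset.Ioi i).image (Fin.castAdd n)) ∪ univ.image (Fin.natAdd n) := by
  ext q
  simp only [Finset.mem_Ioi, Finset.mem_union, Finset.mem_image, Finset.mem_univ, true_and]
  constructor
  · intro hq
    have hq' : (i : ℕ) < (q : ℕ) := hq
    by_cases hqn : (q : ℕ) < n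
    · exact Or.inl ⟨⟨(q : ℕ), hqn⟩, by simpa [Fin.lt_def] using hq', Fin.ext rfl⟩
    · refine Or.inr ⟨⟨(q : ℕ) - n, by have := q.isLt; omega⟩, Fin.ext ?_⟩
      simp only [Fin.coe_natAdd]
      omega
  · rintro (⟨j, hj, rfl⟩ | ⟨j, rfl⟩)
    · simp only [Fin.lt_def, Fin.coe_castAdd] at hj ⊢
      exact hj
    · simp only [Fin.lt_def, Fin.coe_castAdd, Fin.coe_natAdd]
      have := i.isLt; omega

lemma Ioi_natAdd {n : ℕ} (i : Fin n) :
    Finset.Ioi (Fin.natAdd n i) = (Finset.Ioi i).image (Fin.natAdd n) := by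
  ext q
  simp only [Finset.mem_Ioi, Finset.mem_image]
  constructor
  · intro hq
    have hq' : n + (i : ℕ) < (q : ℕ) := hq
    refine ⟨⟨(q : ℕ) - n, by have := q.isLt; omega⟩, by simp [Fin.lt_def]; omega, Fin.ext ?_⟩
    simp only [Fin.coe_natAdd]; omega
  · rintro ⟨j, hj, rfl⟩
    simp only [Fin.lt_def, Fin.coe_natAdd] at hj ⊢
    omega

lemma pairprod_split {n : ℕ} (v : Fin (n+n) → ℂ) :
    (∏ i : Fin (n+n), ∏ j ∈ Finset.Ioi i, (v i - v j)) =
      (∏ i : Fin n, ∏ j ∈ Finset.Ioi i, (v (Fin.castAdd n i) - v (Fin.castAdd n j))) *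
      (∏ i : Fin n, ∏ j : Fin n, (v (Fin.castAdd n i) - v (Fin.natAdd n j))) *
      (∏ i : Fin n, ∏ j ∈ Finset.Ioi i, (v (Fin.natAdd n i) - v (Fin.natAdd n j))) := by
  rw [Fin.prod_univ_add (f := fun i => ∏ j ∈ Finset.Ioi i, (v i - v j))]
  have hnatinj : Function.Injective (Fin.natAdd n : Fin n → Fin (n+n)) := by
    intro a b h; have := congrArg Fin.val h
    simp only [Fin.coe_natAdd] at this
    exact Fin.ext (by omega)
  have hcastinj : Function.Injective (Fin.castAdd n : Fin n → Fin (n+n)) := by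
    intro a b h; have := congrArg Fin.val h
    simpa [Fin.ext_iff] using this
  have h1 : ∀ i : Fin n, ∏ j ∈ Finset.Ioi (Fin.castAdd n i), (v (Fin.castAdd n i) - v j)
      = (∏ j ∈ Finset.Ioi i, (v (Fin.castAdd n i) - v (Fin.castAdd n j))) *
        (∏ j : Fin n, (v (Fin.castAdd n i) - v (Fin.natAdd n j))) := by
    intro i
    rw [Ioi_castAdd i, Finset.prod_union, Finset.prod_image (fun a _ b _ h => hcastinj h),
      Finset.prod_image (fun a _ b _ h => hnatinj h)]
    · rw [Finset.disjoint_left]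
      rintro q hq hq'
      simp only [Finset.mem_image, Finset.mem_univ, true_and] at hq hq'
      obtain ⟨a, _, rfl⟩ := hq
      obtain ⟨b, hb⟩ := hq'
      have := congrArg Fin.val hb
      simp only [Fin.coe_castAdd, Fin.coe_natAdd] at this
      have := a.isLt; omega
  have h2 : ∀ i : Fin n, ∏ j ∈ Finset.Ioi (Fin.natAdd n i), (v (Fin.natAdd n i) - v j)
      = ∏ j ∈ Finset.Ioi i, (v (Fin.natAdd n i) - v (Fin.natAdd n j)) := by
    intro i
    rw [Ioi_natAdd i, Finset.prod_image (fun a _ b _ h => hnatinj h)]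
  rw [Finset.prod_congr rfl (fun i _ => h1 i), Finset.prod_congr rfl (fun i _ => h2 i),
    Finset.prod_mul_distrib]


lemma minor1_det {n : ℕ} (m : ℕ) (Y : Fin (n+n) → ℂ) (r : Fin n → Fin (n+n)) :
    Matrix.det (Matrix.of fun i j : Fin n =>
      (Matrix.of fun h t : Fin (n+n) =>
        Y h ^ ((if (t : ℕ) < n then (2 * m : ℤ) else 0) + ((2 * n : ℕ) : ℤ) - 1 - ((t : ℕ) : ℤ)))
        (r i) (Fin.castAdd n j))
    = (∏ i, Y (r i)) ^ (2 * m + n) * dprod (fun i => Y (r i)) := by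
  have h : (Matrix.of fun i j : Fin n =>
      (Matrix.of fun h t : Fin (n+n) =>
        Y h ^ ((if (t : ℕ) < n then (2 * m : ℤ) else 0) + ((2 * n : ℕ) : ℤ) - 1 - ((t : ℕ) : ℤ)))
        (r i) (Fin.castAdd n j))
      = Matrix.of fun i j : Fin n =>
        (fun i => Y (r i)) i ^ ((2 * m + n) + (n - 1 - (j : ℕ))) := by
    ext i j
    simp only [Matrix.of_apply, Fin.coe_castAdd]
    rw [if_pos j.isLt]
    rw [show ((2 * m : ℤ) + ((2 * n : ℕ) : ℤ) - 1 - ((j : ℕ) : ℤ))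
        = (((2 * m + n) + (n - 1 - (j : ℕ)) : ℕ) : ℤ) from by
      have := j.isLt; push_cast; omega]
    rw [zpow_natCast]
  rw [h, det_shiftpow]

lemma minor2_det {n : ℕ} (m : ℕ) (Y : Fin (n+n) → ℂ) (r : Fin n → Fin (n+n)) :
    Matrix.det (Matrix.of fun i j : Fin n =>
      (Matrix.of fun h t : Fin (n+n) =>
        Y h ^ ((if (t : ℕ) < n then (2 * m : ℤ) else 0) + ((2 * n : ℕ) : ℤ) - 1 - ((t : ℕ) : ℤ)))
        (r i) (Fin.natAdd n j))
    = dprod (fun i => Y (r i)) := by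
  have h : (Matrix.of fun i j : Fin n =>
      (Matrix.of fun h t : Fin (n+n) =>
        Y h ^ ((if (t : ℕ) < n then (2 * m : ℤ) else 0) + ((2 * n : ℕ) : ℤ) - 1 - ((t : ℕ) : ℤ)))
        (r i) (Fin.natAdd n j))
      = Matrix.of fun i j : Fin n =>
        (fun i => Y (r i)) i ^ (n - 1 - (j : ℕ)) := by
    ext i j
    simp only [Matrix.of_apply, Fin.coe_natAdd]
    rw [if_neg (by omega)]
    rw [show ((0 : ℤ) + ((2 * n : ℕ) : ℤ) - 1 - ((n + (j : ℕ) : ℕ) : ℤ))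
        = ((n - 1 - (j : ℕ) : ℕ) : ℤ) from by
      have := j.isLt; push_cast; omega]
    rw [zpow_natCast]
  rw [h, det_descend]

set_option maxHeartbeats 2000000 in
theorem main' (m n : ℕ) (x : Fin n → ℂ) (hYinj : Function.Injective (yvar x)) :
    (Vprod x Finset.univ * Vprod (fun i => (x i)⁻¹) Finset.univ *
        Rprod x Finset.univ Finset.univ) *
      Matrix.det (Matrix.of fun h t : Fin (n + n) =>
        yvar x h ^ ((if (t : ℕ) < n then (2 * m : ℤ) else 0) + ((2 * n : ℕ) : ℤ) - 1 - ((t : ℕ) : ℤ)))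
    = dprod (yvar x) * ∑ A : Finset (Fin n), ∑ B : Finset (Fin n),
        if A.card + B.card = n then
          (-1 : ℂ) ^
              ((∑ a ∈ A, (((a : ℕ) : ℤ) + 1)) + (∑ b ∈ B, (((b : ℕ) : ℤ) + 1)) +
                (n : ℤ) * B.card - ((n + 1).choose 2 : ℤ)) *
            (∏ a ∈ A, x a) ^ (2 * m + n) * (∏ b ∈ B, (x b)⁻¹) ^ (2 * m + n) *
            (Vprod x A * Vprod (fun i => (x i)⁻¹) B * Rprod x A B *
              Vprod x Aᶜ * Vprod (fun i => (x i)⁻¹) Bᶜ * Rprod x Aᶜ Bᶜ)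
        else 0 := by
  classical
  have hyne : ∀ p q : Fin (n+n), p ≠ q → yvar x p - yvar x q ≠ 0 := by
    intro p q hpq
    exact sub_ne_zero.mpr (fun h => hpq (hYinj h))
  rw [laplace]
  rw [Finset.mul_sum]
  rw [← Fintype.sum_bijective
      (fun AB : Finset (Fin n) × Finset (Fin n) => joinSet AB.1 AB.2) joinSet_bij _ _
      (fun p => rfl)]
  rw [Fintype.sum_prod_type]
  simp only [Finset.mul_sum]
  refine Finset.sum_congr rfl fun A _ => Finset.sum_congr rfl fun B _ => ?_
  by_cases hc : A.card + B.card = n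
  · have hS : (joinSet A B).card = n := by rw [card_joinSet]; exact hc
    rw [dif_pos hS, if_pos hc]
    rw [minor1_det m (yvar x) (fun i => rho (joinSet A B) hS (Fin.castAdd n i)),
      minor2_det m (yvar x) (fun i => rho (joinSet A B) hS (Fin.natAdd n i))]
    have hP : (∏ i, yvar x (rho (joinSet A B) hS (Fin.castAdd n i)))
        = (∏ a ∈ A, x a) * (∏ b ∈ B, (x b)⁻¹) := by
      rw [Finset.prod_congr rfl (fun i _ => by rw [rho_left])]
      rw [prod_orderEmbOfFin (joinSet A B) hS (yvar x), prod_joinSet]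
      congr 1
      · exact Finset.prod_congr rfl fun a _ => yvar_d0 x a
      · exact Finset.prod_congr rfl fun b _ => yvar_d1 x b
    rw [hP, mul_pow]
    rw [sign_exponent_eq A B hc]
    -- abbreviations
    set s : ℂ := ((Equiv.Perm.sign (rho (joinSet A B) hS) : ℤ) : ℂ) with hsgn
    set W : ℂ := dprod (fun i => yvar x (rho (joinSet A B) hS (Fin.castAdd n i))) with hW
    set W' : ℂ := dprod (fun i => yvar x (rho (joinSet A B) hS (Fin.natAdd n i))) with hW'
    set C : ℂ := ∏ p ∈ joinSet A B, ∏ q ∈ (joinSet A B)ᶜ, (yvar x p - yvar x q) with hC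
    have hCne : C ≠ 0 := by
      rw [hC]
      refine Finset.prod_ne_zero_iff.mpr fun p hp => ?_
      refine Finset.prod_ne_zero_iff.mpr fun q hq => ?_
      exact hyne p q (fun h => (Finset.mem_compl.mp hq) (h ▸ hp))
    have hs2 : s * s = 1 := by
      rw [hsgn]
      have h := Int.units_mul_self (Equiv.Perm.sign (rho (joinSet A B) hS))
      rw [← Int.cast_mul, ← Units.val_mul, h, Units.val_one, Int.cast_one]
    have hCross' : (∏ i : Fin n, ∏ j : Fin n,
        (yvar x (rho (joinSet A B) hS (Fin.castAdd n i)) -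
         yvar x (rho (joinSet A B) hS (Fin.natAdd n j)))) = C := by
      rw [Finset.prod_congr rfl (fun i _ => Finset.prod_congr rfl
        (fun j _ => by rw [rho_left, rho_right]))]
      rw [hC, ← prod_orderEmbOfFin (joinSet A B) hS
        (fun p => ∏ q ∈ (joinSet A B)ᶜ, (yvar x p - yvar x q))]
      exact Finset.prod_congr rfl fun i _ =>
        prod_orderEmbOfFin (joinSet A B)ᶜ (cardc hS)
          (fun q => yvar x ((joinSet A B).orderEmbOfFin hS i) - yvar x q)
    have hperm : dprod (fun p => yvar x (rho (joinSet A B) hS p)) = s * dprod (yvar x) := by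
      rw [← det_descend (fun p => yvar x (rho (joinSet A B) hS p)), ← det_descend (yvar x)]
      have h : (Matrix.of fun i j : Fin (n+n) =>
          (fun p => yvar x (rho (joinSet A B) hS p)) i ^ (n + n - 1 - (j : ℕ)))
          = (Matrix.of fun i j : Fin (n+n) =>
              yvar x i ^ (n + n - 1 - (j : ℕ))).submatrix (rho (joinSet A B) hS) id := rfl
      rw [h, Matrix.det_permute, hsgn]
    have hWCW : W * C * W' = s * dprod (yvar x) := by
      rw [← hCross', hW, hW']
      rw [← hperm]
      exact (pairprod_split (fun p => yvar x (rho (joinSet A B) hS p))).symm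
    have hmaster := master x A B
    have h6 : (-1 : ℂ) ^ (K2 A + K2 B + Aᶜ.card * B.card) *
        (-1 : ℂ) ^ (K2 A + K2 B + Aᶜ.card * B.card) = 1 := by
      rw [← pow_add]
      exact Even.neg_one_pow ⟨K2 A + K2 B + Aᶜ.card * B.card, rfl⟩
    refine mul_right_cancel₀ hCne ?_
    linear_combination
      ((Vprod x Finset.univ * Vprod (fun i => (x i)⁻¹) Finset.univ *
          Rprod x Finset.univ Finset.univ) * s *
        ((∏ a ∈ A, x a) ^ (2 * m + n) * (∏ b ∈ B, (x b)⁻¹) ^ (2 * m + n))) * hWCW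
      + ((Vprod x Finset.univ * Vprod (fun i => (x i)⁻¹) Finset.univ *
          Rprod x Finset.univ Finset.univ) *
         ((∏ a ∈ A, x a) ^ (2 * m + n) * (∏ b ∈ B, (x b)⁻¹) ^ (2 * m + n)) *
         dprod (yvar x)) * hs2
      - (dprod (yvar x) * ((-1 : ℂ) ^ (K2 A + K2 B + Aᶜ.card * B.card)) *
         ((∏ a ∈ A, x a) ^ (2 * m + n) * (∏ b ∈ B, (x b)⁻¹) ^ (2 * m + n))) * hmaster
      - (dprod (yvar x) *
         ((∏ a ∈ A, x a) ^ (2 * m + n) * (∏ b ∈ B, (x b)⁻¹) ^ (2 * m + n)) *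
         (Vprod x Finset.univ * Vprod (fun i => (x i)⁻¹) Finset.univ *
          Rprod x Finset.univ Finset.univ)) * h6
  · rw [if_neg hc, dif_neg (by rw [card_joinSet]; exact hc), mul_zero, mul_zero]

end SchurAux

set_option maxHeartbeats 2000000 in
/-- **Expansion (4.3).**  Laplace expansion of the specialized Schur function
`s_{((2m)^n)}(x₁,x₁⁻¹,…,xₙ,xₙ⁻¹)` as a double sum over pairs of subsets
`A, B ⊆ [n]` with `|A| + |B| = n`.  Here elements of `[n]` are represented
0-based, so the element sums `Σ_{a∈A} a` become `Σ_{a∈A} (a+1)`. -/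
theorem schur_even_rectangle_laplace_expansion
    (m n : ℕ) (x : Fin n → ℂ) (hx : ∀ i, x i ≠ 0)
    (hdist : Function.Injective (pairVars x)) :
    schurChar (fun t : Fin (2 * n) => if (t : ℕ) < n then (2 * m : ℤ) else 0)
        (pairVars x) =
      (1 / (Vprod x Finset.univ * Vprod (fun i => (x i)⁻¹) Finset.univ *
            Rprod x Finset.univ Finset.univ)) *
        ∑ A : Finset (Fin n), ∑ B : Finset (Fin n),
          if A.card + B.card = n then
            (-1 : ℂ) ^
                ((∑ a ∈ A, (((a : ℕ) : ℤ) + 1)) + (∑ b ∈ B, (((b : ℕ) : ℤ) + 1)) +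
                  (n : ℤ) * B.card - ((n + 1).choose 2 : ℤ)) *
              (∏ a ∈ A, x a) ^ (2 * m + n) * (∏ b ∈ B, (x b)⁻¹) ^ (2 * m + n) *
              (Vprod x A * Vprod (fun i => (x i)⁻¹) B * Rprod x A B *
                Vprod x Aᶜ * Vprod (fun i => (x i)⁻¹) Bᶜ * Rprod x Aᶜ Bᶜ)
          else 0 := by
  classical
  have hnn : n + n = 2 * n := by omega
  have hYinj : Function.Injective (SchurAux.yvar x) := by
    intro p q h
    have h2 : pairVars x (finCongr (by omega : n + n = 2 * n) p)
        = pairVars x (finCongr (by omega : n + n = 2 * n) q) := h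
    exact (finCongr (by omega : n + n = 2 * n)).injective (hdist h2)
  have hdY : SchurAux.dprod (SchurAux.yvar x) ≠ 0 := by
    rw [SchurAux.dprod]
    refine Finset.prod_ne_zero_iff.mpr fun i _ => ?_
    refine Finset.prod_ne_zero_iff.mpr fun j hj => ?_
    refine sub_ne_zero.mpr fun h => ?_
    exact (Finset.mem_Ioi.mp hj).ne' (hYinj h).symm
  have hV1 : Vprod x Finset.univ ≠ 0 := by
    rw [Vprod]
    refine Finset.prod_ne_zero_iff.mpr fun a _ => Finset.prod_ne_zero_iff.mpr fun b _ => ?_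
    by_cases hab : a < b
    · rw [if_pos hab]
      refine sub_ne_zero.mpr fun h => hab.ne ?_
      have h2 : SchurAux.yvar x (SchurAux.d0 a) = SchurAux.yvar x (SchurAux.d0 b) := by
        rw [SchurAux.yvar_d0, SchurAux.yvar_d0, h]
      exact SchurAux.d0_inj (hYinj h2)
    · rw [if_neg hab]; exact one_ne_zero
  have hV2 : Vprod (fun i => (x i)⁻¹) Finset.univ ≠ 0 := by
    rw [Vprod]
    refine Finset.prod_ne_zero_iff.mpr fun a _ => Finset.prod_ne_zero_iff.mpr fun b _ => ?_
    by_cases hab : a < b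
    · rw [if_pos hab]
      refine sub_ne_zero.mpr fun h => hab.ne ?_
      have h2 : SchurAux.yvar x (SchurAux.d1 a) = SchurAux.yvar x (SchurAux.d1 b) := by
        rw [SchurAux.yvar_d1, SchurAux.yvar_d1]
        exact h
      exact SchurAux.d1_inj (hYinj h2)
    · rw [if_neg hab]; exact one_ne_zero
  have hR : Rprod x Finset.univ Finset.univ ≠ 0 := by
    rw [Rprod]
    refine Finset.prod_ne_zero_iff.mpr fun a _ => Finset.prod_ne_zero_iff.mpr fun b _ => ?_
    refine sub_ne_zero.mpr fun h => ?_
    have h2 : SchurAux.yvar x (SchurAux.d0 a) = SchurAux.yvar x (SchurAux.d1 b) := by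
      rw [SchurAux.yvar_d0, SchurAux.yvar_d1]
      exact h
    exact SchurAux.d0_ne_d1 a b (hYinj h2)
  have hD1 : Vprod x Finset.univ * Vprod (fun i => (x i)⁻¹) Finset.univ *
      Rprod x Finset.univ Finset.univ ≠ 0 := mul_ne_zero (mul_ne_zero hV1 hV2) hR
  unfold schurChar
  have hnum : Matrix.det (Matrix.of fun h t : Fin (2 * n) =>
      pairVars x h ^ ((if (t : ℕ) < n then (2 * m : ℤ) else 0) +
        ((2 * n : ℕ) : ℤ) - 1 - ((t : ℕ) : ℤ)))
      = Matrix.det (Matrix.of fun h t : Fin (n + n) =>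
        SchurAux.yvar x h ^ ((if (t : ℕ) < n then (2 * m : ℤ) else 0) +
          ((2 * n : ℕ) : ℤ) - 1 - ((t : ℕ) : ℤ))) := by
    rw [← Matrix.det_submatrix_equiv_self (finCongr hnn)]
    congr 1
  have hden : Matrix.det (Matrix.of fun h t : Fin (2 * n) =>
      pairVars x h ^ (((2 * n : ℕ) : ℤ) - 1 - ((t : ℕ) : ℤ)))
      = SchurAux.dprod (SchurAux.yvar x) := by
    rw [← Matrix.det_submatrix_equiv_self (finCongr hnn)]
    have h2 : (Matrix.of fun h t : Fin (2 * n) =>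
        pairVars x h ^ (((2 * n : ℕ) : ℤ) - 1 - ((t : ℕ) : ℤ))).submatrix
          (finCongr hnn) (finCongr hnn)
        = Matrix.of fun i j : Fin (n + n) => SchurAux.yvar x i ^ (n + n - 1 - (j : ℕ)) := by
      ext i j
      simp only [Matrix.submatrix_apply, Matrix.of_apply, finCongr_apply, Fin.coe_cast]
      rw [show (((2 * n : ℕ) : ℤ) - 1 - ((j : ℕ) : ℤ)) = ((n + n - 1 - (j : ℕ) : ℕ) : ℤ) from by
        have := j.isLt; push_cast; omega, zpow_natCast]
      rfl
    rw [h2, SchurAux.det_descend]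
  rw [hnum, hden]
  have hmain := SchurAux.main' m n x hYinj
  rw [div_eq_iff hdY]
  refine mul_left_cancel₀ hD1 ?_
  rw [hmain, one_div, ← mul_assoc, ← mul_assoc, mul_inv_cancel₀ hD1, one_mul]
  exact mul_comm _ _
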